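/- For the Hamiltonian H(r, p_r, p_θ) = (1/2)(p_r² + 2p_θ²/r²) on the half-plane r > 0, and the (non-affine) point transformation from polar to Cartesian coordinates, the elementary Hamiltonian H_p·H_q is invariant: the transformed quantity H̄_p̄·H̄_q̄ computed in Cartesian coordinates equals H_p·H_q = (∂H/∂p_r)(∂H/∂r) = p_r · (−2p_θ²/r³), at all corresponding phase-space points. That is, δ = 0 for this Hamiltonian despite the transformation being non-affine. -/

import Mathlib

noncomputable def HbarCart (x y px py : ℝ) : ℝ :=
  (1 / 2) * (px ^ 2 + py ^ 2) + (1 / 2) * (x * py - y * px) ^ 2 / (x ^ 2 + y ^ 2)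

lemma deriv_px (x y px py : ℝ) :
    deriv (fun u => HbarCart x y u py) px
      = px + (x * py - y * px) * (-y) / (x ^ 2 + y ^ 2) := by
  have h : HasDerivAt (fun u => HbarCart x y u py)
      (px + (x * py - y * px) * (-y) / (x ^ 2 + y ^ 2)) px := by
    unfold HbarCart
    have h1 : HasDerivAt (fun u : ℝ => (1/2) * (u ^ 2 + py ^ 2)) px px := by
      have := ((hasDerivAt_pow 2 px).add_const (py ^ 2)).const_mul (1/2 : ℝ)
      exact this.congr_deriv (by ring)
    have h2 : HasDerivAt (fun u : ℝ => (1/2) * (x * py - y * u) ^ 2 / (x ^ 2 + y ^ 2))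
        ((x * py - y * px) * (-y) / (x ^ 2 + y ^ 2)) px := by
      have hin : HasDerivAt (fun u : ℝ => x * py - y * u) (-y) px := by
        simpa using ((hasDerivAt_id px).const_mul y).const_sub (x * py)
      have := (((hin.pow 2).const_mul (1/2 : ℝ)).div_const (x ^ 2 + y ^ 2))
      exact this.congr_deriv (by ring)
    exact h1.add h2
  exact h.deriv

lemma deriv_py (x y px py : ℝ) :
    deriv (fun u => HbarCart x y px u) py
      = py + (x * py - y * px) * x / (x ^ 2 + y ^ 2) := by
  have h : HasDerivAt (fun u => HbarCart x y px u)
      (py + (x * py - y * px) * x / (x ^ 2 + y ^ 2)) py := by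
    unfold HbarCart
    have h1 : HasDerivAt (fun u : ℝ => (1/2) * (px ^ 2 + u ^ 2)) py py := by
      have := ((hasDerivAt_pow 2 py).const_add (px ^ 2)).const_mul (1/2 : ℝ)
      exact this.congr_deriv (by ring)
    have h2 : HasDerivAt (fun u : ℝ => (1/2) * (x * u - y * px) ^ 2 / (x ^ 2 + y ^ 2))
        ((x * py - y * px) * x / (x ^ 2 + y ^ 2)) py := by
      have hin : HasDerivAt (fun u : ℝ => x * u - y * px) x py := by
        simpa using ((hasDerivAt_id py).const_mul x).sub_const (y * px)
      have := (((hin.pow 2).const_mul (1/2 : ℝ)).div_const (x ^ 2 + y ^ 2))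
      exact this.congr_deriv (by ring)
    exact h1.add h2
  exact h.deriv

lemma deriv_x (x y px py : ℝ) (hd : x ^ 2 + y ^ 2 ≠ 0) :
    deriv (fun u => HbarCart u y px py) x
      = ((x * py - y * px) * py * (x ^ 2 + y ^ 2)
          - (1/2) * (x * py - y * px) ^ 2 * (2 * x)) / (x ^ 2 + y ^ 2) ^ 2 := by
  have h : HasDerivAt (fun u => HbarCart u y px py)
      (((x * py - y * px) * py * (x ^ 2 + y ^ 2)
          - (1/2) * (x * py - y * px) ^ 2 * (2 * x)) / (x ^ 2 + y ^ 2) ^ 2) x := by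
    unfold HbarCart
    have hN : HasDerivAt (fun u : ℝ => (1/2) * (u * py - y * px) ^ 2)
        ((x * py - y * px) * py) x := by
      have hin : HasDerivAt (fun u : ℝ => u * py - y * px) py x := by
        simpa using ((hasDerivAt_id x).mul_const py).sub_const (y * px)
      have := (hin.pow 2).const_mul (1/2 : ℝ)
      exact this.congr_deriv (by ring)
    have hD : HasDerivAt (fun u : ℝ => u ^ 2 + y ^ 2) (2 * x) x := by
      simpa using (hasDerivAt_pow 2 x).add_const (y ^ 2)
    have := (hN.div hD hd).const_add ((1/2) * (px ^ 2 + py ^ 2))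
    exact this
  exact h.deriv

lemma deriv_y (x y px py : ℝ) (hd : x ^ 2 + y ^ 2 ≠ 0) :
    deriv (fun u => HbarCart x u px py) y
      = (-(x * py - y * px) * px * (x ^ 2 + y ^ 2)
          - (1/2) * (x * py - y * px) ^ 2 * (2 * y)) / (x ^ 2 + y ^ 2) ^ 2 := by
  have h : HasDerivAt (fun u => HbarCart x u px py)
      ((-(x * py - y * px) * px * (x ^ 2 + y ^ 2)
          - (1/2) * (x * py - y * px) ^ 2 * (2 * y)) / (x ^ 2 + y ^ 2) ^ 2) y := by
    unfold HbarCart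
    have hN : HasDerivAt (fun u : ℝ => (1/2) * (x * py - u * px) ^ 2)
        (-(x * py - y * px) * px) y := by
      have hin : HasDerivAt (fun u : ℝ => x * py - u * px) (-px) y := by
        simpa using ((hasDerivAt_id y).mul_const px).const_sub (x * py)
      have := (hin.pow 2).const_mul (1/2 : ℝ)
      exact this.congr_deriv (by ring)
    have hD : HasDerivAt (fun u : ℝ => x ^ 2 + u ^ 2) (2 * y) y := by
      simpa using (hasDerivAt_pow 2 y).const_add (x ^ 2)
    have := (hN.div hD hd).const_add ((1/2) * (px ^ 2 + py ^ 2))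
    exact this
  exact h.deriv

theorem artificial_hamiltonian_invariant_elementary :
    ∀ r θ pr pθ : ℝ, 0 < r →
      (let x := r * Real.cos θ
       let y := r * Real.sin θ
       let px := pr * Real.cos θ - pθ / r * Real.sin θ
       let py := pr * Real.sin θ + pθ / r * Real.cos θ
       deriv (fun u => HbarCart x y u py) px * deriv (fun u => HbarCart u y px py) x
         + deriv (fun u => HbarCart x y px u) py * deriv (fun u => HbarCart x u px py) y)
        = pr * (-2 * pθ ^ 2 / r ^ 3) := by
  intro r θ pr pθ hr
  have hr0 : r ≠ 0 := ne_of_gt hr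
  set c := Real.cos θ
  set s := Real.sin θ
  have hcs : c ^ 2 + s ^ 2 = 1 := by
    simpa [c, s] using Real.cos_sq_add_sin_sq θ
  simp only []
  have hd : (r * c) ^ 2 + (r * s) ^ 2 ≠ 0 := by
    have : (r * c) ^ 2 + (r * s) ^ 2 = r ^ 2 := by linear_combination r ^ 2 * hcs
    rw [this]; positivity
  rw [deriv_px, deriv_py, deriv_x _ _ _ _ hd, deriv_y _ _ _ _ hd]
  have hx : (r * c) * (pr * s + pθ / r * c) - (r * s) * (pr * c - pθ / r * s) = pθ := by
    field_simp; linear_combination pθ * hcs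
  rw [hx]
  have hrr : (r * c) ^ 2 + (r * s) ^ 2 = r ^ 2 := by linear_combination r ^ 2 * hcs
  rw [hrr]
  field_simp
  ring_nf
  linear_combination (-2 * pr * r * pθ ^ 2) * hcs
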